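/- Let λ ∈ Γ_k, the cone {λ ∈ ℝⁿ : σ_j(λ) > 0 for all 1 ≤ j ≤ k}. For integers k > l ≥ 0, r > s ≥ 0 with k ≥ r and l ≥ s, one has [ (σ_k(λ)/C(n,k)) / (σ_l(λ)/C(n,l)) ]^{1/(k−l)} ≤ [ (σ_r(λ)/C(n,r)) / (σ_s(λ)/C(n,s)) ]^{1/(r−s)}. -/

import Mathlib

open Finset

/-- The k-th elementary symmetric polynomial of x : Fin n -> R. -/
noncomputable def esymm (n k : ℕ) (x : Fin n → ℝ) : ℝ :=
  ∑ s ∈ Finset.univ.powersetCard k, ∏ i ∈ s, x i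

/-- The Garding cone Gamma_k. -/
def Gamma (n k : ℕ) : Set (Fin n → ℝ) :=
  {x | ∀ j, 1 ≤ j → j ≤ k → 0 < esymm n j x}

open Multiset Polynomial

namespace MyNewton

lemma esymm_zero' (s : Multiset ℝ) : s.esymm 0 = 1 := by simp [Multiset.esymm]

lemma esymm_cons (a : ℝ) (s : Multiset ℝ) (k : ℕ) :
    (a ::ₘ s).esymm (k+1) = s.esymm (k+1) + a * s.esymm k := by
  simp only [Multiset.esymm, powersetCard_cons, Multiset.map_add, Multiset.sum_add,
    Multiset.map_map]
  congr 1
  rw [← Multiset.sum_map_mul_left]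
  congr 1
  apply Multiset.map_congr rfl
  intro t _
  simp [Multiset.prod_cons]

lemma esymm_of_card_lt {s : Multiset ℝ} {k : ℕ} (h : Multiset.card s < k) : s.esymm k = 0 := by
  rw [Multiset.esymm, Multiset.powersetCard_eq_empty _ h]
  simp

lemma esymm_card (s : Multiset ℝ) : s.esymm (Multiset.card s) = s.prod := by
  induction s using Multiset.induction_on with
  | empty => simp [esymm_zero']
  | cons a s ih =>
      rw [Multiset.card_cons, esymm_cons, esymm_of_card_lt (Nat.lt_succ_self _), ih]
      simp [Multiset.prod_cons]

lemma esymm_one' (s : Multiset ℝ) : s.esymm 1 = s.sum := by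
  rw [Multiset.esymm, Multiset.powersetCard_one, Multiset.map_map]
  simp

lemma sum_sq_identity (s : Multiset ℝ) :
    s.sum ^ 2 = (s.map (fun x => x ^ 2)).sum + 2 * s.esymm 2 := by
  induction s using Multiset.induction_on with
  | empty => rw [esymm_of_card_lt (by simp)]; simp
  | cons a s ih =>
      rw [Multiset.sum_cons, Multiset.map_cons, Multiset.sum_cons,
        show (2:ℕ) = 1 + 1 from rfl, esymm_cons, esymm_one']
      linear_combination ih

lemma sq_sum_le (s : Multiset ℝ) :
    s.sum ^ 2 ≤ (Multiset.card s : ℝ) * (s.map (fun x => x ^ 2)).sum := by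
  induction s using Multiset.induction_on with
  | empty => simp
  | cons a s ih =>
      by_cases hs : s = 0
      · simp [hs]
      rw [Multiset.sum_cons, Multiset.map_cons, Multiset.sum_cons, Multiset.card_cons]
      push_cast
      set S := s.sum
      set Q := (s.map (fun x => x ^ 2)).sum
      set c := (Multiset.card s : ℝ)
      have hc1 : (1:ℝ) ≤ c := by
        have h1 : 1 ≤ Multiset.card s := by
          rcases Multiset.exists_mem_of_ne_zero hs with ⟨x, hx⟩
          exact Multiset.card_pos_iff_exists_mem.mpr ⟨x, hx⟩
        show (1:ℝ) ≤ (Multiset.card s : ℝ)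
        exact_mod_cast h1
      have hQ : (0:ℝ) ≤ Q := by
        apply Multiset.sum_nonneg
        intro x hx
        obtain ⟨y, _, rfl⟩ := Multiset.mem_map.mp hx
        positivity
      nlinarith [sq_nonneg (c * a - S), ih, hQ, hc1, sq_nonneg (a - S)]

lemma esymm_inv (s : Multiset ℝ) (h0 : (0:ℝ) ∉ s) :
    ∀ j, j ≤ Multiset.card s →
      ((s.map (fun x => x⁻¹)).esymm j) * s.prod = s.esymm (Multiset.card s - j) := by
  induction s using Multiset.induction_on with
  | empty =>
      intro j hj
      have : j = 0 := Nat.le_zero.mp (by simpa using hj)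
      subst this
      simp [esymm_zero']
  | cons a s ih =>
      intro j hj
      have ha : a ≠ 0 := fun h => h0 (h ▸ Multiset.mem_cons_self a s)
      have h0s : (0:ℝ) ∉ s := fun h => h0 (Multiset.mem_cons_of_mem h)
      set c := Multiset.card s with hc
      rcases Nat.eq_zero_or_pos j with rfl | hjpos
      · rw [esymm_zero', one_mul, Nat.sub_zero]
        exact (esymm_card _).symm
      · obtain ⟨i, rfl⟩ : ∃ i, j = i + 1 := ⟨j - 1, by omega⟩
        have hic : i ≤ c := by
          have := hj
          rw [Multiset.card_cons] at this
          omega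
        have e2 := ih h0s i hic
        rw [Multiset.map_cons, Multiset.prod_cons, Multiset.card_cons, esymm_cons,
          Nat.succ_sub_succ]
        by_cases hieq : i = c
        · have hz : ((s.map (fun x => x⁻¹)).esymm (i+1)) = 0 := by
            apply esymm_of_card_lt
            rw [Multiset.card_map]
            omega
          have hci0 : c - i = 0 := by omega
          rw [hz, hci0]
          calc (0 + a⁻¹ * (s.map (fun x => x⁻¹)).esymm i) * (a * s.prod)
              = (a⁻¹ * a) * ((s.map (fun x => x⁻¹)).esymm i * s.prod) := by ring
            _ = (a ::ₘ s).esymm 0 := by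
                rw [inv_mul_cancel₀ ha, one_mul, e2, hci0, esymm_zero', esymm_zero']
        · have hilt : i < c := lt_of_le_of_ne hic hieq
          have e1 := ih h0s (i+1) (by omega)
          have hci : c - i = (c - (i+1)) + 1 := by omega
          rw [hci, esymm_cons]
          calc ((s.map (fun x => x⁻¹)).esymm (i+1) + a⁻¹ * (s.map (fun x => x⁻¹)).esymm i)
                * (a * s.prod)
              = a * ((s.map (fun x => x⁻¹)).esymm (i+1) * s.prod)
                + (a⁻¹ * a) * ((s.map (fun x => x⁻¹)).esymm i * s.prod) := by ring
            _ = _ := by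
                rw [inv_mul_cancel₀ ha, one_mul, e1, e2, hci]
                ring


lemma deriv_esymm (s : Multiset ℝ) (hs : s ≠ 0) :
    ∃ t : Multiset ℝ, Multiset.card t = Multiset.card s - 1 ∧
      ∀ j, j ≤ Multiset.card s - 1 →
        (Multiset.card s : ℝ) * t.esymm j
          = ((Multiset.card s - j : ℕ) : ℝ) * s.esymm j := by
  obtain ⟨m, hm⟩ : ∃ m, Multiset.card s = m + 1 :=
    ⟨Multiset.card s - 1, (Nat.succ_pred_eq_of_pos (Multiset.card_pos.mpr hs)).symm⟩
  set P : ℝ[X] := (s.map fun a => X - C a).prod with hP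
  have hmonic : P.Monic := monic_multiset_prod_of_monic _ _ (fun a _ => monic_X_sub_C a)
  have hdeg : P.natDegree = m + 1 := by
    rw [hP, natDegree_multiset_prod_X_sub_C_eq_card, hm]
  have hroots : P.roots = s := roots_multiset_prod_X_sub_C s
  have hD : (derivative P).coeff m = ((m:ℝ)+1) := by
    rw [coeff_derivative]
    have : P.coeff (m+1) = 1 := by
      rw [← hdeg]; exact hmonic.coeff_natDegree
    rw [this, one_mul]
  have hDne : derivative P ≠ 0 := by
    intro h
    rw [h, Polynomial.coeff_zero] at hD
    have : (0:ℝ) < (m:ℝ)+1 := by positivity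
    linarith [hD]
  have hdegD : (derivative P).natDegree ≤ m := by
    have := natDegree_derivative_le P
    omega
  have h1 := P.card_roots_le_derivative
  have h2 := card_roots' (derivative P)
  rw [hroots, hm] at h1
  have hcardt : Multiset.card (derivative P).roots = m := by omega
  have hdegD' : (derivative P).natDegree = m := by omega
  set t := (derivative P).roots with ht
  have hsplit : Splits (derivative P) :=
    splits_iff_card_roots.mpr (by rw [hcardt, hdegD'])
  have hlead : (derivative P).leadingCoeff = ((m:ℝ)+1) := by
    rw [Polynomial.leadingCoeff, hdegD']; exact hD
  have hfact := hsplit.eq_prod_roots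
  refine ⟨t, by rw [hcardt]; omega, fun j hj => ?_⟩
  have hj' : j ≤ m := by omega
  have hc1 : (derivative P).coeff (m - j) = P.coeff (m - j + 1) * ((m-j : ℕ) + 1 : ℝ) :=
    coeff_derivative P (m - j)
  have hmj : m - j + 1 = (m+1) - j := by omega
  have hc2 : P.coeff (m - j + 1) = (-1:ℝ)^j * s.esymm j := by
    rw [hmj, hP, Multiset.prod_X_sub_C_coeff s (by rw [hm]; omega)]
    have he : Multiset.card s - ((m+1) - j) = j := by omega
    rw [he]
  have hc3 : (derivative P).coeff (m - j) = ((m:ℝ)+1) * ((-1:ℝ)^j * t.esymm j) := by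
    conv_lhs => rw [hfact]
    rw [coeff_C_mul, hlead, Multiset.prod_X_sub_C_coeff t (by rw [hcardt]; omega)]
    have he : Multiset.card t - (m - j) = j := by rw [hcardt]; omega
    rw [he]
  have hEq : ((m:ℝ)+1) * ((-1:ℝ)^j * t.esymm j)
      = ((-1:ℝ)^j * s.esymm j) * ((m-j : ℕ) + 1 : ℝ) := by
    rw [← hc3, hc1, hc2]
  have hA : ((-1:ℝ)^j) * ((-1:ℝ)^j) = 1 := by
    rw [← pow_add]
    simp [pow_add, pow_mul, Even.neg_one_pow ⟨j, rfl⟩]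
  have hcast : ((m - j : ℕ) : ℝ) = (m:ℝ) - (j:ℝ) := Nat.cast_sub hj'
  rw [hcast] at hEq
  have final : ((m:ℝ)+1) * t.esymm j = ((m:ℝ)-(j:ℝ)+1) * s.esymm j := by
    linear_combination ((-1:ℝ)^j) * hEq -
      (((m:ℝ)+1) * t.esymm j - ((m:ℝ)-(j:ℝ)+1) * s.esymm j) * hA
  rw [hm]
  have hcast2 : ((m + 1 - j : ℕ) : ℝ) = (m:ℝ) - (j:ℝ) + 1 := by
    have h3 : m + 1 - j = (m - j) + 1 := by omega
    rw [h3]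
    push_cast [Nat.cast_sub hj']
    ring
  rw [hcast2]
  push_cast
  linear_combination final


lemma two_mul_choose_two (n : ℕ) : 2 * n.choose 2 = n * (n - 1) := by
  induction n with
  | zero => rfl
  | succ m ih =>
      rw [Nat.choose_succ_succ, Nat.choose_one_right, Nat.mul_add, ih, Nat.succ_sub_one]
      cases m with
      | zero => rfl
      | succ k =>
          rw [Nat.succ_sub_one]
          ring

lemma choose_shift (m i : ℕ) : (m + 1 - i) * (m+1).choose i = (m+1) * m.choose i := by
  have h1 := Nat.add_one_mul_choose_eq m i
  have h2 := Nat.choose_succ_right_eq (m+1) i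
  rw [h1, h2, Nat.mul_comm]

/-- normalized symmetric mean -/
noncomputable def pm (s : Multiset ℝ) (j : ℕ) : ℝ :=
  s.esymm j / ((Multiset.card s).choose j : ℝ)

theorem newton_aux : ∀ n : ℕ, ∀ s : Multiset ℝ, Multiset.card s = n →
    ∀ j, j + 2 ≤ n → pm s j * pm s (j+2) ≤ pm s (j+1)^2 := by
  intro n
  induction n using Nat.strong_induction_on with
  | _ n ih =>
    intro s hcard j hj
    rcases lt_or_eq_of_le hj with hlt | heq
    · -- step case via derivative
      have hs0 : s ≠ 0 := by
        intro h
        rw [h] at hcard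
        simp at hcard
        omega
      obtain ⟨t, hct, hrel⟩ := deriv_esymm s hs0
      rw [hcard] at hct hrel
      have key : ∀ i, i ≤ n - 1 → pm t i = pm s i := by
        intro i hi
        obtain ⟨m, rfl⟩ : ∃ m, n = m + 1 := ⟨n - 1, by omega⟩
        have hi' : i ≤ m := by omega
        unfold pm
        rw [hct, hcard]
        have hpos1 : (0:ℝ) < ((m+1).choose i : ℝ) := by
          exact_mod_cast Nat.choose_pos (by omega)
        have hpos2 : (0:ℝ) < ((m+1-1).choose i : ℝ) := by
          exact_mod_cast Nat.choose_pos (by simpa using hi')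
        rw [div_eq_div_iff hpos2.ne' hpos1.ne']
        have hrel' := hrel i (by omega)
        have hn0 : ((m:ℝ)+1) ≠ 0 := by positivity
        have hsimp : m + 1 - 1 = m := by omega
        rw [hsimp]
        apply mul_left_cancel₀ hn0
        have hid := choose_shift m i
        calc ((m:ℝ)+1) * (t.esymm i * ((m+1).choose i : ℝ))
            = (((m:ℕ)+1 : ℕ):ℝ) * t.esymm i * ((m+1).choose i : ℝ) := by push_cast; ring
          _ = (((m+1-i : ℕ)):ℝ) * s.esymm i * ((m+1).choose i : ℝ) := by
              rw [hrel']
          _ = s.esymm i * (((m+1-i) * (m+1).choose i : ℕ) : ℝ) := by push_cast; ring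
          _ = s.esymm i * (((m+1) * m.choose i : ℕ) : ℝ) := by rw [hid]
          _ = ((m:ℝ)+1) * (s.esymm i * (m.choose i : ℝ)) := by push_cast; ring
      have hj' : j + 2 ≤ n - 1 := by omega
      have hstep := ih (n-1) (by omega) t hct j hj'
      rw [key j (by omega), key (j+1) (by omega), key (j+2) (by omega)] at hstep
      exact hstep
    · -- base case : j + 2 = card s
      subst heq
      by_cases hp : s.prod = 0
      · have hz : pm s (j+2) = 0 := by
          unfold pm
          rw [show j+2 = Multiset.card s from hcard.symm, esymm_card, hp, zero_div]
        rw [hz, mul_zero]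
        positivity
      · have h0 : (0:ℝ) ∉ s := fun h => hp (Multiset.prod_eq_zero h)
        have hinv := esymm_inv s h0
        set z := s.map (fun x : ℝ => x⁻¹) with hzdef
        have hcz : Multiset.card z = j + 2 := by rw [hzdef, Multiset.card_map, hcard]
        have A1 : z.esymm 1 * s.prod = s.esymm (j+1) := by
          have := hinv 1 (by omega)
          rwa [hcard, show j + 2 - 1 = j + 1 from by omega] at this
        have A2 : z.esymm 2 * s.prod = s.esymm j := by
          have := hinv 2 (by omega)
          rwa [hcard, show j + 2 - 2 = j from by omega] at this
        have Atop : s.esymm (j+2) = s.prod := by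
          rw [show j+2 = Multiset.card s from hcard.symm, esymm_card]
        set E1 := z.esymm 1 with hE1
        set E2 := z.esymm 2 with hE2
        set Pd := s.prod with hPd
        set Q := (z.map (fun x => x ^ 2)).sum with hQ
        have F1 : E1^2 = Q + 2*E2 := by
          rw [hE1, esymm_one']
          exact sum_sq_identity z
        have F2 : E1^2 ≤ ((j:ℝ)+2)*Q := by
          rw [hE1, esymm_one']
          have := sq_sum_le z
          rwa [hcz, show (((j+2 : ℕ)):ℝ) = (j:ℝ)+2 from by push_cast; ring] at this
        -- choose values
        have hch1 : (j+2).choose (j+2) = 1 := Nat.choose_self _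
        have hch2 : (j+2).choose (j+1) = j+2 := Nat.choose_succ_self_right _
        have hch3 : (j+2).choose j = (j+2).choose 2 := by
          have := Nat.choose_symm (n := j+2) (k := 2) (by omega)
          rwa [show j + 2 - 2 = j from by omega] at this
        have hC2R : 2 * (((j+2).choose 2 : ℕ):ℝ) = ((j:ℝ)+2)*((j:ℝ)+1) := by
          have := two_mul_choose_two (j+2)
          rw [show j + 2 - 1 = j + 1 from by omega] at this
          exact_mod_cast this
        have hC2pos : (0:ℝ) < (((j+2).choose 2 : ℕ):ℝ) := by
          exact_mod_cast Nat.choose_pos (by omega)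
        have hjn : (0:ℝ) < (j:ℝ)+2 := by positivity
        -- core inequality
        have e2' : 2*((j:ℝ)+2)^2*E2 = ((j:ℝ)+2)^2*(E1^2 - Q) := by
          linear_combination (-((j:ℝ)+2)^2) * F1
        have e3' : 0 ≤ ((j:ℝ)+2)*(((j:ℝ)+2)*Q - E1^2) :=
          mul_nonneg hjn.le (by linarith [F2])
        have e1' : 2*(((j+2).choose 2 : ℕ):ℝ)*E1^2 = ((j:ℝ)+2)*((j:ℝ)+1)*E1^2 := by
          linear_combination E1^2 * hC2R
        have keyI : ((j:ℝ)+2)^2 * E2 ≤ (((j+2).choose 2 : ℕ):ℝ) * E1^2 := by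
          nlinarith [e1', e2', e3']
        -- final assembly
        unfold pm
        rw [hcard, hch1, hch2, hch3, ← A1, ← A2, Atop]
        rw [Nat.cast_one, div_one, div_mul_eq_mul_div, div_pow, div_le_div_iff₀ hC2pos]
        · have hfin := mul_le_mul_of_nonneg_right keyI (sq_nonneg Pd)
          push_cast
          nlinarith [hfin]
        · have : (0:ℝ) < ((j:ℝ)+2)^2 := by positivity
          calc (0:ℝ) < ((j:ℝ)+2)^2 := this
            _ = ((j+2 : ℕ):ℝ)^2 := by push_cast; ring


lemma esymm_eq (n k : ℕ) (x : Fin n → ℝ) :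
    _root_.esymm n k x = (Finset.univ.val.map x).esymm k :=
  (Finset.esymm_map_val x Finset.univ k).symm

lemma esymm_zero_eq_one (n : ℕ) (x : Fin n → ℝ) : _root_.esymm n 0 x = 1 := by
  rw [esymm_eq, esymm_zero']

theorem newton_tuple (n : ℕ) (x : Fin n → ℝ) (j : ℕ) (hj : j + 2 ≤ n) :
    (_root_.esymm n j x / (n.choose j : ℝ)) * (_root_.esymm n (j+2) x / (n.choose (j+2) : ℝ))
      ≤ (_root_.esymm n (j+1) x / (n.choose (j+1) : ℝ))^2 := by
  have hcard : Multiset.card (Finset.univ.val.map x) = n := by simp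
  have h := newton_aux n (Finset.univ.val.map x) hcard j hj
  unfold pm at h
  rw [hcard] at h
  rw [esymm_eq n j x, esymm_eq n (j+1) x, esymm_eq n (j+2) x]
  exact h

end MyNewton

set_option maxHeartbeats 1000000 in
/-- Maclaurin-type quotient inequality on Gamma_k. -/
theorem maclaurin_quotient (n k l r s : ℕ) (hlk : l < k) (hsr : s < r)
    (hkn : k ≤ n) (hrk : r ≤ k) (hsl : s ≤ l)
    (lam : Fin n → ℝ) (hlam : lam ∈ Gamma n k) :
    ((esymm n k lam / (n.choose k : ℝ)) / (esymm n l lam / (n.choose l : ℝ)))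
        ^ ((1 : ℝ) / ((k : ℝ) - (l : ℝ))) ≤
      ((esymm n r lam / (n.choose r : ℝ)) / (esymm n s lam / (n.choose s : ℝ)))
        ^ ((1 : ℝ) / ((r : ℝ) - (s : ℝ))) := by
  set P : ℕ → ℝ := fun j => esymm n j lam / (n.choose j : ℝ) with hPdef
  have hpos : ∀ j, j ≤ k → 0 < P j := by
    intro j hjk
    rcases Nat.eq_zero_or_pos j with rfl | hj1
    · rw [hPdef]
      simp only [MyNewton.esymm_zero_eq_one, Nat.choose_zero_right, Nat.cast_one, div_one]
      norm_num
    · have h1 : 0 < esymm n j lam := hlam j hj1 hjk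
      have h2 : (0:ℝ) < (n.choose j : ℝ) := by
        exact_mod_cast Nat.choose_pos (le_trans hjk hkn)
      exact div_pos h1 h2
  set q : ℕ → ℝ := fun i => P (i+1) / P i with hqdef
  have hqpos : ∀ i, i + 1 ≤ k → 0 < q i := fun i hi =>
    div_pos (hpos (i+1) hi) (hpos i (by omega))
  have hstep : ∀ i, i + 2 ≤ k → q (i+1) ≤ q i := by
    intro i hi
    have hnewton := MyNewton.newton_tuple n lam i (le_trans hi hkn)
    have h0 := hpos i (by omega)
    have h1 := hpos (i+1) (by omega)
    have h2 := hpos (i+2) (by omega)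
    rw [hqdef]
    rw [div_le_div_iff₀ h1 h0]
    nlinarith [hnewton]
  have hmono : ∀ a b : ℕ, a ≤ b → b + 1 ≤ k → q b ≤ q a := by
    intro a b hab
    induction b, hab using Nat.le_induction with
    | base => intro _; exact le_refl _
    | succ b hab ih =>
        intro hbk
        exact le_trans (hstep b hbk) (ih (by omega))
  have tel : ∀ a, a ≤ k → ∀ b, a ≤ b → b ≤ k →
      (∏ i ∈ Finset.Ico a b, q i) = P b / P a := by
    intro a ha b hab
    induction b, hab using Nat.le_induction with
    | base =>
        intro _
        rw [Finset.Ico_self, Finset.prod_empty, div_self (ne_of_gt (hpos a ha))]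
    | succ b hab ih =>
        intro hbk
        rw [Finset.prod_Ico_succ_top hab, ih (by omega)]
        have hb0 := (hpos b (by omega)).ne'
        have ha0 := (hpos a ha).ne'
        rw [hqdef]
        field_simp
  -- bounds on products
  have prod_le : ∀ a b c, a ≤ b → b ≤ k → (∀ i, a ≤ i → i < b → q i ≤ c) → (0:ℝ) ≤ c →
      (∏ i ∈ Finset.Ico a b, q i) ≤ c ^ (b - a) := by
    intro a b c hab hbk hc hc0
    have := Finset.prod_le_prod (f := q) (g := fun _ => c) (s := Finset.Ico a b)
      (fun i hi => by
        rw [Finset.mem_Ico] at hi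
        exact (hqpos i (by omega)).le)
      (fun i hi => by
        rw [Finset.mem_Ico] at hi
        exact hc i hi.1 hi.2)
    rwa [Finset.prod_const, Nat.card_Ico] at this
  have prod_ge : ∀ a b c, a ≤ b → b ≤ k → (∀ i, a ≤ i → i < b → c ≤ q i) → (0:ℝ) ≤ c →
      c ^ (b - a) ≤ (∏ i ∈ Finset.Ico a b, q i) := by
    intro a b c hab hbk hc hc0
    have := Finset.prod_le_prod (f := fun _ => c) (g := q) (s := Finset.Ico a b)
      (fun i hi => hc0)
      (fun i hi => by
        rw [Finset.mem_Ico] at hi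
        exact hc i hi.1 hi.2)
    rwa [Finset.prod_const, Nat.card_Ico] at this
  -- the main nat-power inequality
  set X := ∏ i ∈ Finset.Ico l k, q i with hX
  set Y := ∏ i ∈ Finset.Ico s r, q i with hY
  set E := ∏ i ∈ Finset.Ico s l, q i with hE
  set F := ∏ i ∈ Finset.Ico r k, q i with hF
  have hXpos : 0 < X := Finset.prod_pos (fun i hi => by
    rw [Finset.mem_Ico] at hi; exact hqpos i (by omega))
  have hYpos : 0 < Y := Finset.prod_pos (fun i hi => by
    rw [Finset.mem_Ico] at hi; exact hqpos i (by omega))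
  have hEpos : 0 < E := Finset.prod_pos (fun i hi => by
    rw [Finset.mem_Ico] at hi; exact hqpos i (by omega))
  have hFpos : 0 < F := Finset.prod_pos (fun i hi => by
    rw [Finset.mem_Ico] at hi; exact hqpos i (by omega))
  have hql : 0 < q l := hqpos l hlk
  have hqr1 : 0 < q (r-1) := hqpos (r-1) (by omega)
  -- Step 1 : X ^ (k - s) ≤ (E * X) ^ (k - l)
  have hXub : X ≤ q l ^ (k - l) :=
    prod_le l k (q l) hlk.le le_rfl (fun i hi1 hi2 => hmono l i hi1 (by omega)) hql.le
  have hElb : q l ^ (l - s) ≤ E :=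
    prod_ge s l (q l) hsl (by omega) (fun i hi1 hi2 => hmono i l (by omega) (by omega)) hql.le
  have step1 : X ^ (k - s) ≤ (E * X) ^ (k - l) := by
    have h1 : X ^ (l - s) ≤ (q l ^ (k - l)) ^ (l - s) :=
      pow_le_pow_left₀ hXpos.le hXub _
    have h2 : (q l ^ (l - s)) ^ (k - l) ≤ E ^ (k - l) :=
      pow_le_pow_left₀ (pow_nonneg hql.le _) hElb _
    have hks : k - s = (k - l) + (l - s) := by omega
    calc X ^ (k - s) = X ^ (k - l) * X ^ (l - s) := by rw [hks, pow_add]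
      _ ≤ X ^ (k - l) * (q l ^ (k - l)) ^ (l - s) :=
          mul_le_mul_of_nonneg_left h1 (pow_nonneg hXpos.le _)
      _ = X ^ (k - l) * (q l ^ (l - s)) ^ (k - l) := by
          rw [← pow_mul, ← pow_mul, Nat.mul_comm]
      _ ≤ X ^ (k - l) * E ^ (k - l) := mul_le_mul_of_nonneg_left h2 (pow_nonneg hXpos.le _)
      _ = (E * X) ^ (k - l) := by rw [mul_pow]; ring
  -- Step 2 : (Y * F) ^ (r - s) ≤ Y ^ (k - s)
  have hFub : F ≤ q (r-1) ^ (k - r) :=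
    prod_le r k (q (r-1)) hrk le_rfl
      (fun i hi1 hi2 => hmono (r-1) i (by omega) (by omega)) hqr1.le
  have hYlb : q (r-1) ^ (r - s) ≤ Y :=
    prod_ge s r (q (r-1)) hsr.le hrk
      (fun i hi1 hi2 => hmono i (r-1) (by omega) (by omega)) hqr1.le
  have step2 : (Y * F) ^ (r - s) ≤ Y ^ (k - s) := by
    have h1 : F ^ (r - s) ≤ (q (r-1) ^ (k - r)) ^ (r - s) :=
      pow_le_pow_left₀ hFpos.le hFub _
    have h2 : (q (r-1) ^ (r - s)) ^ (k - r) ≤ Y ^ (k - r) :=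
      pow_le_pow_left₀ (pow_nonneg hqr1.le _) hYlb _
    have hks : k - s = (r - s) + (k - r) := by omega
    calc (Y * F) ^ (r - s) = Y ^ (r - s) * F ^ (r - s) := mul_pow _ _ _
      _ ≤ Y ^ (r - s) * (q (r-1) ^ (k - r)) ^ (r - s) :=
          mul_le_mul_of_nonneg_left h1 (pow_nonneg hYpos.le _)
      _ = Y ^ (r - s) * (q (r-1) ^ (r - s)) ^ (k - r) := by
          rw [← pow_mul, ← pow_mul, Nat.mul_comm]
      _ ≤ Y ^ (r - s) * Y ^ (k - r) := mul_le_mul_of_nonneg_left h2 (pow_nonneg hYpos.le _)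
      _ = Y ^ (k - s) := by rw [hks, pow_add]
  -- consecutive products
  have hEX : E * X = ∏ i ∈ Finset.Ico s k, q i :=
    Finset.prod_Ico_consecutive _ hsl (by omega)
  have hYF : Y * F = ∏ i ∈ Finset.Ico s k, q i :=
    Finset.prod_Ico_consecutive _ hsr.le (by omega)
  have main : X ^ ((r - s) * (k - s)) ≤ Y ^ ((k - l) * (k - s)) := by
    calc X ^ ((r - s) * (k - s)) = (X ^ (k - s)) ^ (r - s) := by
          rw [← pow_mul, Nat.mul_comm]
      _ ≤ ((E * X) ^ (k - l)) ^ (r - s) := pow_le_pow_left₀ (pow_nonneg hXpos.le _) step1 _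
      _ = ((Y * F) ^ (r - s)) ^ (k - l) := by
          rw [hEX, ← hYF, ← pow_mul, ← pow_mul, Nat.mul_comm]
      _ ≤ (Y ^ (k - s)) ^ (k - l) := pow_le_pow_left₀ (pow_nonneg (mul_nonneg hYpos.le hFpos.le) _) step2 _
      _ = Y ^ ((k - l) * (k - s)) := by rw [← pow_mul, Nat.mul_comm]
  have hks0 : k - s ≠ 0 := by omega
  have hnatpow : X ^ (r - s) ≤ Y ^ (k - l) := by
    have h := main
    rw [pow_mul, pow_mul] at h
    exact le_of_pow_le_pow_left₀ hks0 (pow_nonneg hYpos.le _) h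
  -- translate products to quotients
  have hXval : X = P k / P l := tel l (by omega) k hlk.le le_rfl
  have hYval : Y = P r / P s := tel s (by omega) r hsr.le hrk
  rw [← hXval, ← hYval]
  -- final rpow manipulation
  have ha0 : (0:ℝ) < ((k - l : ℕ) : ℝ) := by
    have : 0 < k - l := by omega
    exact_mod_cast this
  have hb0 : (0:ℝ) < ((r - s : ℕ) : ℝ) := by
    have : 0 < r - s := by omega
    exact_mod_cast this
  have hcastk : (k:ℝ) - (l:ℝ) = ((k - l : ℕ) : ℝ) := by
    rw [Nat.cast_sub hlk.le]
  have hcastr : (r:ℝ) - (s:ℝ) = ((r - s : ℕ) : ℝ) := by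
    rw [Nat.cast_sub hsr.le]
  rw [hcastk, hcastr]
  have key : (X ^ (r - s) : ℝ) ^ ((1:ℝ) / (((k-l:ℕ)):ℝ) / (((r-s:ℕ)):ℝ))
      ≤ (Y ^ (k - l) : ℝ) ^ ((1:ℝ) / (((k-l:ℕ)):ℝ) / (((r-s:ℕ)):ℝ)) :=
    Real.rpow_le_rpow (pow_nonneg hXpos.le _) hnatpow (by positivity)
  have hXid : (X ^ (r - s) : ℝ) ^ ((1:ℝ) / (((k-l:ℕ)):ℝ) / (((r-s:ℕ)):ℝ))
      = X ^ ((1:ℝ) / (((k-l:ℕ)):ℝ)) := by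
    rw [← Real.rpow_natCast X (r - s), ← Real.rpow_mul hXpos.le]
    congr 1
    field_simp
  have hYid : (Y ^ (k - l) : ℝ) ^ ((1:ℝ) / (((k-l:ℕ)):ℝ) / (((r-s:ℕ)):ℝ))
      = Y ^ ((1:ℝ) / (((r-s:ℕ)):ℝ)) := by
    rw [← Real.rpow_natCast Y (k - l), ← Real.rpow_mul hYpos.le]
    congr 1
    field_simp
  rw [hXid, hYid] at key
  exact key
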